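/- Let k : [0,∞) → ℝ be any function such that for every m ≥ 0, k(m) ∈ [π/4, π/2) and m·sin(2k(m)) + k(m)·cos(2k(m)) = 0. Then there exist constants C > 0 and m₀ > 0 such that for all m ∈ [0, m₀] there holds |k(m) − π/4 − (2/π)·m + (16/π³)·m²| ≤ C·m³. -/

import Mathlib

open Set

set_option maxHeartbeats 1000000 in
/-- If `k(m)` denotes (any choice of) the root of
`m·sin(2k) + k·cos(2k) = 0` lying in `[π/4, π/2)`, then
`k(m) = π/4 + (2/π)m − (16/π³)m² + O(m³)` as `m → 0⁺`. -/
theorem root_asymptotics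
    (k : ℝ → ℝ)
    (hk : ∀ m : ℝ, 0 ≤ m → k m ∈ Ico (Real.pi / 4) (Real.pi / 2) ∧
      m * Real.sin (2 * k m) + k m * Real.cos (2 * k m) = 0) :
    ∃ C > 0, ∃ m₀ > 0, ∀ m ∈ Icc (0 : ℝ) m₀,
      |k m - Real.pi / 4 - (2 / Real.pi) * m + (16 / Real.pi ^ 3) * m ^ 2|
        ≤ C * m ^ 3 := by
  have hπ := Real.pi_pos
  have hπ3 : (3:ℝ) ≤ Real.pi := by linarith [Real.pi_gt_three]
  have hπ4 : Real.pi ≤ 4 := by linarith [Real.pi_lt_d2]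
  refine ⟨24, by norm_num, 1/4, by norm_num, ?_⟩
  intro m hm
  obtain ⟨hm0, hm4⟩ := hm
  obtain ⟨⟨hkl, hku⟩, heq⟩ := hk m hm0
  obtain ⟨ε, hkm⟩ : ∃ ε : ℝ, k m = Real.pi / 4 + ε := ⟨k m - Real.pi / 4, by ring⟩
  have hε0 : 0 ≤ ε := by linarith
  have hεπ : ε < Real.pi / 4 := by linarith
  -- rewrite the defining equation
  have heq2 : m * Real.cos (2*ε) = (Real.pi/4 + ε) * Real.sin (2*ε) := by
    have h2k : 2 * (Real.pi/4 + ε) = Real.pi/2 + 2*ε := by ring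
    rw [hkm, h2k, Real.sin_add, Real.cos_add, Real.sin_pi_div_two, Real.cos_pi_div_two] at heq
    linarith [heq]
  have hcos : 0 < Real.cos (2*ε) := by
    apply Real.cos_pos_of_mem_Ioo
    constructor <;> [linarith; linarith]
  -- first bound:  π ε ≤ 2 m
  have hsin_ge : 2*ε * Real.cos (2*ε) ≤ Real.sin (2*ε) := by
    rcases eq_or_lt_of_le hε0 with h | h
    · simp [← h]
    · have ht := Real.lt_tan (x := 2*ε) (by linarith) (by linarith)
      rw [Real.tan_eq_sin_div_cos, lt_div_iff₀ hcos] at ht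
      linarith
  have hπεm : Real.pi * ε ≤ 2 * m := by
    nlinarith [mul_le_mul_of_nonneg_left hsin_ge (by positivity : (0:ℝ) ≤ Real.pi/4 + ε),
      mul_pos hcos hπ, mul_nonneg hε0 hcos.le]
  have hεm : ε ≤ m := by nlinarith
  have hε14 : ε ≤ 1/4 := le_trans hεm hm4
  -- the tangent relation
  obtain ⟨t, htdef⟩ : ∃ t : ℝ, t = Real.tan (2*ε) := ⟨_, rfl⟩
  have hmt : m = (Real.pi/4 + ε) * t := by
    rw [htdef, Real.tan_eq_sin_div_cos]
    rw [mul_div_assoc', eq_div_iff hcos.ne']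
    linear_combination heq2
  have ht_ge : 2*ε ≤ t := by
    rw [htdef, Real.tan_eq_sin_div_cos, le_div_iff₀ hcos]; linarith
  have hcos_half : (1:ℝ)/2 ≤ Real.cos (2*ε) := by
    have := Real.one_sub_sq_div_two_le_cos (x := 2*ε)
    nlinarith
  have ht_le : t ≤ 2*ε + 8*ε^3 := by
    have hsle : Real.sin (2*ε) ≤ 2*ε := Real.sin_le (by linarith)
    have h1 : t ≤ 2*ε / Real.cos (2*ε) := by
      rw [htdef, Real.tan_eq_sin_div_cos]
      gcongr
    have h2 : 2*ε / Real.cos (2*ε) ≤ 2*ε + 8*ε^3 := by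
      rw [div_le_iff₀ hcos]
      have hc := Real.one_sub_sq_div_two_le_cos (x := 2*ε)
      have hpos : (0:ℝ) ≤ 2*ε + 8*ε^3 := by positivity
      have h4 : (0:ℝ) ≤ 1 - 4*ε^2 := by nlinarith
      have key : 2*ε ≤ (2*ε + 8*ε^3) * (1 - (2*ε)^2/2) := by
        nlinarith [mul_nonneg (pow_nonneg hε0 3) h4]
      have hprod := mul_le_mul_of_nonneg_left hc hpos
      linarith
    exact h1.trans h2
  obtain ⟨r, hrdef⟩ : ∃ r : ℝ, r = t - 2*ε := ⟨_, rfl⟩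
  have hr0 : 0 ≤ r := by rw [hrdef]; linarith
  have hr8 : r ≤ 8*ε^3 := by rw [hrdef]; linarith
  have hm' : m = (Real.pi/4 + ε) * (2*ε + r) := by rw [hmt, hrdef]; ring
  -- division-free algebra: work with P = π³·(target)
  have hε3 : ε^3 ≤ m^3 := pow_le_pow_left₀ hε0 hεm 3
  have hε2 : ε^2 ≤ m^2 := pow_le_pow_left₀ hε0 hεm 2
  have hm3 : 0 ≤ m^3 := pow_nonneg hm0 3
  have hs0 : 0 ≤ (Real.pi/2 + 2*ε)*r := by positivity
  have hc25 : Real.pi/2 + 2*ε ≤ 5/2 := by linarith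
  have hr8m : r ≤ 8*m^3 := by linarith
  have hs20 : (Real.pi/2 + 2*ε)*r ≤ 20*m^3 := by
    have h := mul_le_mul hc25 hr8m hr0 (by norm_num : (0:ℝ) ≤ 5/2)
    linarith only [h]
  have hB : Real.pi*ε - 2*m = -(4*ε^2) - (Real.pi/2 + 2*ε)*r := by rw [hm']; ring
  have hB0 : Real.pi*ε - 2*m ≤ 0 := by
    have h := sq_nonneg ε
    rw [hB]; linarith only [h, hs0]
  have hm32 : m^3 ≤ (1/4)*m^2 := by
    have h := mul_nonneg (sq_nonneg m) (show (0:ℝ) ≤ 1/4 - m by linarith)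
    linarith only [h]
  have hB9 : -(9*m^2) ≤ Real.pi*ε - 2*m := by
    rw [hB]; linarith only [hs20, hε2, hm32]
  have hS4 : Real.pi*ε + 2*m ≤ 4*m := by linarith
  have hS0 : 0 ≤ Real.pi*ε + 2*m := by positivity
  have hP : Real.pi^3*ε - 2*Real.pi^2*m + 16*m^2
      = -4*((Real.pi*ε - 2*m)*(Real.pi*ε + 2*m)) - Real.pi^2*((Real.pi/2 + 2*ε)*r) := by
    rw [hm']; ring
  have hprod0 : (Real.pi*ε - 2*m)*(Real.pi*ε + 2*m) ≤ 0 :=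
    mul_nonpos_of_nonpos_of_nonneg hB0 hS0
  have hprod36 : -(36*m^3) ≤ (Real.pi*ε - 2*m)*(Real.pi*ε + 2*m) := by
    have h1 : (-(Real.pi*ε - 2*m)) * (Real.pi*ε + 2*m) ≤ (9*m^2)*(4*m) :=
      mul_le_mul (by linarith only [hB9]) hS4 hS0 (by positivity)
    nlinarith only [h1]
  have hπ2 : Real.pi^2 ≤ 16 := by nlinarith only [hπ4, hπ]
  have hπ2s : 0 ≤ Real.pi^2*((Real.pi/2 + 2*ε)*r) :=
    mul_nonneg (pow_nonneg hπ.le 2) hs0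
  have hπ2s' : Real.pi^2*((Real.pi/2 + 2*ε)*r) ≤ 16*(20*m^3) :=
    mul_le_mul hπ2 hs20 hs0 (by norm_num)
  have hPub : Real.pi^3*ε - 2*Real.pi^2*m + 16*m^2 ≤ 144*m^3 := by
    rw [hP]; linarith only [hprod36, hπ2s]
  have hPlb : -(320*m^3) ≤ Real.pi^3*ε - 2*Real.pi^2*m + 16*m^2 := by
    rw [hP]; linarith only [hprod0, hπ2s']
  -- conclude
  rw [hkm]
  have hπ3pos : 0 < Real.pi^3 := by positivity
  have hPT : Real.pi/4 + ε - Real.pi / 4 - (2 / Real.pi) * m + (16 / Real.pi ^ 3) * m ^ 2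
      = (Real.pi^3*ε - 2*Real.pi^2*m + 16*m^2)/Real.pi^3 := by
    field_simp
    ring
  rw [hPT, abs_div, abs_of_pos hπ3pos, div_le_iff₀ hπ3pos]
  have h27 : (27:ℝ) ≤ Real.pi^3 := by
    have h := pow_le_pow_left₀ (by norm_num : (0:ℝ) ≤ 3) hπ3 3
    norm_num at h
    linarith only [h]
  rw [abs_le]
  have hkey : 0 ≤ m^3 * (Real.pi^3 - 27) := mul_nonneg hm3 (by linarith only [h27])
  constructor
  · linarith only [hkey, hPlb, hm3]
  · linarith only [hkey, hPub, hm3]
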